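/- arXiv:1101.3029 — 3 statements merged into one kernel-verified Lean document; each statement's English description precedes it below -/
import Mathlib

section
/- Let p ≡ 1 (mod 6) be a prime and let χ be a nontrivial cubic multiplicative character of F_{p²}. Let β ∈ F_p^* be an element that is a cube in F_p and a quadratic non-residue in F_p (so that X² − β is irreducible over F_p), and let α ∈ F_{p²} be a root of X² − β. Then G_2(1,χ) = G_1(1,χ) · A_1(1/(2α)), where A_1(γ) = Σ_{z ∈ F_p} χ(γ + z) for γ ∈ F_{p²}, and G_1(1,χ) is the Gauss sum over F_p of the restriction of χ to F_p. -/
set_option maxHeartbeats 1000000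


open Finset

/-- `ζ_p = exp(2πi/p)`. -/
noncomputable def zetaC (p : ℕ) : ℂ := Complex.exp (2 * (Real.pi : ℂ) * Complex.I / (p : ℂ))

/-- The Gauss sum `G_n(1,χ) = Σ_{y ∈ F} χ(y) ζ_p^{Tr(y)}` of a function `χ : F → ℂ`
over a finite field `F` of characteristic `p`. -/
noncomputable def gaussSumF (p : ℕ) (F : Type) [Field F] [Fintype F] [Algebra (ZMod p) F]
    (χ : F → ℂ) : ℂ :=
  ∑ y : F, χ y * zetaC p ^ (Algebra.trace (ZMod p) F y).val

/-- The Gauss sum `G_1(1,χ) = Σ_{y ∈ F_p} χ(y) ζ_p^y` over the prime field `F_p = ZMod p`. -/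
noncomputable def gaussSumP (p : ℕ) [NeZero p] (χ : ZMod p → ℂ) : ℂ :=
  ∑ y : ZMod p, χ y * zetaC p ^ y.val

/-- The standard additive character value. -/
noncomputable def eZ (p : ℕ) [NeZero p] (x : ZMod p) : ℂ := zetaC p ^ x.val

/-- Restriction of a multiplicative character along a ring hom of fields. -/
noncomputable def resChar {F K : Type*} [Field F] [Field K] (ι : F →+* K)
    (χ : MulChar K ℂ) : MulChar F ℂ where
  toFun x := χ (ι x)
  map_one' := by simp
  map_mul' x y := by simp
  map_nonunit' x hx := by
    have hx0 : x = 0 := by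
      by_contra h
      exact hx (isUnit_iff_ne_zero.mpr h)
    subst hx0
    show χ (ι 0) = 0
    rw [map_zero ι]
    exact χ.map_zero

theorem stmt16 (p : ℕ) [NeZero p] (hp : p.Prime) (hp6 : p % 6 = 1)
    (K : Type) [Field K] [Fintype K] [Algebra (ZMod p) K]
    (hcard : Fintype.card K = p ^ 2)
    (χ : MulChar K ℂ) (hord : orderOf χ = 3)
    (β : ZMod p) (hβ0 : β ≠ 0)
    (hcube : ∃ c : ZMod p, c ^ 3 = β)
    (hnres : ¬ ∃ c : ZMod p, c ^ 2 = β)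
    (α : K) (hα : α ^ 2 = algebraMap (ZMod p) K β) :
    gaussSumF p K (fun y => χ y) =
      gaussSumP p (fun y => χ (algebraMap (ZMod p) K y)) *
        ∑ z : ZMod p, χ ((2 * α)⁻¹ + algebraMap (ZMod p) K z) := by
  haveI : Fact p.Prime := ⟨hp⟩
  set ι : ZMod p →+* K := (algebraMap (ZMod p) K : ZMod p →+* K) with hιdef
  have hιa : ∀ x : ZMod p, algebraMap (ZMod p) K x = ι x := fun _ => rfl
  have hιinj : Function.Injective ι := ι.injective
  -- basic numerics
  have hp2 : p % 2 = 1 := by omega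
  have hp3 : p % 3 = 1 := by omega
  have hpne2 : p ≠ 2 := by omega
  have h2Z : (2 : ZMod p) ≠ 0 := by
    intro h
    have h2 : ((2 : ℕ) : ZMod p) = 0 := by exact_mod_cast h
    have := (ZMod.natCast_eq_zero_iff 2 p).mp h2
    have := Nat.le_of_dvd (by norm_num) this
    have := hp.two_le
    omega
  have hβK : ι β ≠ 0 := fun h => hβ0 (hιinj (h.trans (map_zero ι).symm))
  have hαne : α ≠ 0 := by
    intro h
    rw [h] at hα
    exact hβK (by simpa using hα.symm)
  have h2K : (2 : K) ≠ 0 := by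
    rw [show ((2 : K)) = ι 2 from (map_ofNat ι 2).symm]
    intro h
    exact h2Z (hιinj (h.trans (map_zero ι).symm))
  have h2α : (2 : K) * α ≠ 0 := mul_ne_zero h2K hαne
  -- Euler's criterion
  have heul : β ^ (p / 2) = -1 := by
    have hx : β ^ (p / 2) * β ^ (p / 2) = 1 := by
      rw [← pow_add]
      have hh : p / 2 + p / 2 = p - 1 := by omega
      rw [hh, ZMod.pow_card_sub_one_eq_one hβ0]
    rcases mul_self_eq_one_iff.mp hx with h | h
    · exfalso
      apply hnres
      obtain ⟨r, hr⟩ := (ZMod.euler_criterion p hβ0).mpr h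
      exact ⟨r, by rw [sq]; exact hr.symm⟩
    · exact h
  -- α^p = -α
  have hfrobα : α ^ p = -α := by
    have h1 : α ^ p = (α ^ 2) ^ (p / 2) * α := by
      rw [← pow_mul, ← pow_succ]
      congr 1
      omega
    rw [h1, hα, ← map_pow, heul]
    simp
  -- trace of α is zero
  haveI hchar : CharP K p := charP_of_injective_algebraMap hιinj p
  have htrα : Algebra.trace (ZMod p) K α = 0 := by
    let σ : K ≃ₐ[ZMod p] K := AlgEquiv.ofBijective
      { toRingHom := frobenius K p
        commutes' := fun r => by
          show frobenius K p (algebraMap (ZMod p) K r) = algebraMap (ZMod p) K r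
          rw [frobenius_def, ← map_pow, ZMod.pow_card] }
      (Finite.injective_iff_bijective.mp (frobenius_inj K p))
    have h1 : Algebra.trace (ZMod p) K (σ α) = Algebra.trace (ZMod p) K α :=
      Algebra.trace_eq_of_algEquiv σ α
    have hσα : σ α = -α := by
      show frobenius K p α = -α
      rw [frobenius_def]
      exact hfrobα
    rw [hσα, map_neg] at h1
    have h2 : (2 : ZMod p) * Algebra.trace (ZMod p) K α = 0 := by
      linear_combination (-1 : ZMod p) * h1
    rcases mul_eq_zero.mp h2 with h | h
    · exact absurd h h2Z
    · exact h
  -- finrank = 2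
  have hfinrank : Module.finrank (ZMod p) K = 2 := by
    have h1 : Fintype.card K = p ^ Module.finrank (ZMod p) K := by
      have := Module.card_eq_pow_finrank (K := ZMod p) (V := K)
      rwa [ZMod.card] at this
    rw [hcard] at h1
    exact (Nat.pow_right_injective hp.two_le h1.symm)
  -- trace formula
  have htr : ∀ u v : ZMod p, Algebra.trace (ZMod p) K (ι u + ι v * α) = 2 * u := by
    intro u v
    rw [map_add]
    have e1 : Algebra.trace (ZMod p) K (ι u) = 2 * u := by
      rw [hιdef, Algebra.trace_algebraMap, hfinrank]
      rw [nsmul_eq_mul]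
      norm_num
    have e2 : Algebra.trace (ZMod p) K (ι v * α) = 0 := by
      have : ι v * α = v • α := (Algebra.smul_def v α).symm
      rw [this, LinearMap.map_smul, htrα, smul_zero]
    rw [e1, e2, add_zero]
  -- membership in prime field
  have hmem : ∀ z : K, z ^ p = z → ∃ a : ZMod p, ι a = z := by
    intro z hz
    classical
    set P : Polynomial K := Polynomial.X ^ p - Polynomial.X with hP
    have hPne : P ≠ 0 := FiniteField.X_pow_card_sub_X_ne_zero K hp.one_lt
    have hroot : ∀ a : ZMod p, P.IsRoot (ι a) := by
      intro a
      simp only [hP, Polynomial.IsRoot, Polynomial.eval_sub, Polynomial.eval_pow,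
        Polynomial.eval_X]
      rw [← map_pow, ZMod.pow_card, sub_self]
    set s : Finset K := Finset.univ.image ι with hs
    have hsub : s ⊆ P.roots.toFinset := by
      intro x hx
      obtain ⟨a, _, rfl⟩ := Finset.mem_image.mp hx
      rw [Multiset.mem_toFinset, Polynomial.mem_roots hPne]
      exact hroot a
    have hcards : s.card = p := by
      rw [hs, Finset.card_image_of_injective _ hιinj, Finset.card_univ, ZMod.card]
    have hcardr : P.roots.toFinset.card ≤ p := by
      refine le_trans (Multiset.toFinset_card_le _) (le_trans (Polynomial.card_roots' P) ?_)
      exact le_of_eq (FiniteField.X_pow_card_sub_X_natDegree_eq K hp.one_lt)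
    have hseq : s = P.roots.toFinset :=
      Finset.eq_of_subset_of_card_le hsub (by omega)
    have hzmem : z ∈ P.roots.toFinset := by
      rw [Multiset.mem_toFinset, Polynomial.mem_roots hPne]
      simp only [hP, Polynomial.IsRoot, Polynomial.eval_sub, Polynomial.eval_pow,
        Polynomial.eval_X]
      rw [hz, sub_self]
    rw [← hseq] at hzmem
    obtain ⟨a, _, ha⟩ := Finset.mem_image.mp hzmem
    exact ⟨a, ha⟩
  -- cube values
  have hχ3 : ∀ y : K, y ≠ 0 → χ y ^ 3 = 1 := by
    have hχpow : χ ^ 3 = 1 := by rw [← hord]; exact pow_orderOf_eq_one χ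
    intro y hy
    rw [← MulChar.pow_apply' χ (by norm_num) y, hχpow,
      MulChar.one_apply (isUnit_iff_ne_zero.mpr hy)]
  -- nontriviality of restriction
  have hres1 : resChar ι χ ≠ 1 := by
    intro h1
    have hχ1 : χ = 1 := by
      apply MulChar.ext
      intro a
      have hz : ((a : K) ^ (p + 1)) ^ p = (a : K) ^ (p + 1) := by
        have hcard' : (a : K) ^ (p ^ 2) = a := by
          rw [← hcard]; exact FiniteField.pow_card _
        calc ((a : K) ^ (p + 1)) ^ p = (a : K) ^ (p ^ 2 + p) := by
              rw [← pow_mul]; ring_nf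
          _ = (a : K) ^ (p ^ 2) * (a : K) ^ p := by rw [pow_add]
          _ = (a : K) * (a : K) ^ p := by rw [hcard']
          _ = (a : K) ^ (p + 1) := by rw [pow_add, pow_one, mul_comm]
      obtain ⟨zz, hzz⟩ := hmem _ hz
      have hzzu : IsUnit zz := by
        rw [isUnit_iff_ne_zero]
        intro h
        rw [h, map_zero] at hzz
        exact (pow_ne_zero _ (Units.ne_zero a)) hzz.symm
      have e1 : χ a ^ (p + 1) = 1 := by
        calc χ a ^ (p + 1) = χ ((a : K) ^ (p + 1)) := (map_pow χ _ _).symm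
          _ = χ (ι zz) := by rw [hzz]
          _ = resChar ι χ zz := rfl
          _ = 1 := by rw [h1, MulChar.one_apply hzzu]
      have e2 : χ a ^ 3 = 1 := hχ3 a (Units.ne_zero a)
      have hgcd : Nat.gcd 3 (p + 1) = 1 := by
        have h3 : ¬ (3 ∣ (p + 1)) := by omega
        exact (Nat.Prime.coprime_iff_not_dvd Nat.prime_three).mpr h3
      have hdvd : orderOf (χ a) ∣ 1 := by
        rw [← hgcd]
        exact Nat.dvd_gcd (orderOf_dvd_of_pow_eq_one e2) (orderOf_dvd_of_pow_eq_one e1)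
      have : χ a = 1 := orderOf_eq_one_iff.mp (Nat.eq_one_of_dvd_one hdvd ▸ rfl)
      rw [this, MulChar.one_apply_coe]
    rw [hχ1] at hord
    simp at hord
  have hsum0 : ∑ v : ZMod p, χ (ι v) = 0 := by
    have := MulChar.sum_eq_zero_of_ne_one hres1
    exact this
  -- χ α = 1
  have hχα : χ α = 1 := by
    obtain ⟨c, hc⟩ := hcube
    have hcne : c ≠ 0 := by
      intro h
      rw [h] at hc
      simp at hc
      exact hβ0 hc.symm
    have hicne : ι c ≠ 0 := fun h => hcne (hιinj (h.trans (map_zero ι).symm))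
    have e2 : χ α ^ 2 = 1 := by
      rw [← map_pow, hα, ← hc, map_pow, map_pow]
      exact hχ3 (ι c) hicne
    have e3 : χ α ^ 3 = 1 := hχ3 α hαne
    have hdvd : orderOf (χ α) ∣ 1 := by
      have : Nat.gcd 3 2 = 1 := by norm_num
      rw [← this]
      exact Nat.dvd_gcd (orderOf_dvd_of_pow_eq_one e3) (orderOf_dvd_of_pow_eq_one e2)
    exact orderOf_eq_one_iff.mp (Nat.eq_one_of_dvd_one hdvd ▸ rfl)
  -- χ (ι 2⁻¹) = χ ((2α)⁻¹)
  have hχ2 : χ (ι (2 : ZMod p)⁻¹) = χ ((2 * α)⁻¹) := by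
    have hι2 : (2 : K) = ι 2 := (map_ofNat ι 2).symm
    have h1 : χ ((2 * α)⁻¹) * χ (2 * α) = 1 := by
      rw [← map_mul, inv_mul_cancel₀ h2α, map_one]
    have h2 : χ (ι (2 : ZMod p)⁻¹) * χ (2 * α) = 1 := by
      rw [← map_mul]
      have harg : ι (2 : ZMod p)⁻¹ * (2 * α) = α := by
        rw [hι2, ← mul_assoc, ← map_mul, inv_mul_cancel₀ h2Z, map_one, one_mul]
      rw [harg, hχα]
    have hne : χ (2 * α) ≠ 0 := by
      intro h
      rw [h, mul_zero] at h1
      exact one_ne_zero h1.symm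
    exact mul_right_cancel₀ hne (h2.trans h1.symm)
  -- abbreviations (as plain terms)
  have hG1rfl : gaussSumP p (fun y => χ (algebraMap (ZMod p) K y))
      = ∑ y : ZMod p, χ (ι y) * eZ p y := rfl
  -- RHS transformation
  have hR : (∑ z : ZMod p, χ ((2 * α)⁻¹ + ι z))
      = χ ((2 * α)⁻¹) * ∑ s : ZMod p, χ (1 + ι s * α) := by
    have step1 : ∀ z : ZMod p, χ ((2 * α)⁻¹ + ι z)
        = χ ((2 * α)⁻¹) * χ (1 + ι (2 * z) * α) := by
      intro z
      rw [← map_mul]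
      congr 1
      have h2zι : ι (2 * z) = 2 * ι z := by rw [map_mul, map_ofNat]
      rw [h2zι]
      have : (2 * α)⁻¹ * (1 + 2 * ι z * α) = (2 * α)⁻¹ + ι z := by
        rw [mul_add, mul_one]
        congr 1
        calc (2 * α)⁻¹ * (2 * ι z * α) = ι z * ((2 * α)⁻¹ * (2 * α)) := by ring
          _ = ι z := by rw [inv_mul_cancel₀ h2α, mul_one]
      exact this.symm
    rw [Finset.sum_congr rfl (fun z _ => step1 z), ← Finset.mul_sum]
    congr 1
    exact Fintype.sum_bijective (fun z : ZMod p => 2 * z) (mulLeft_bijective₀ 2 h2Z)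
      (fun z => χ (1 + ι (2 * z) * α)) (fun s => χ (1 + ι s * α)) (fun z => rfl)
  -- the bijection (u,v) ↦ ι u + ι v * α
  have hbij : Function.Bijective (fun uv : ZMod p × ZMod p => ι uv.1 + ι uv.2 * α) := by
    rw [Fintype.bijective_iff_injective_and_card]
    constructor
    · rintro ⟨u, v⟩ ⟨u', v'⟩ h
      simp only at h
      by_cases hv : v = v'
      · subst hv
        have h1 : ι u = ι u' := add_right_cancel h
        have := hιinj h1
        simp [this]
      · exfalso
        apply hnres
        have hvv : v' - v ≠ 0 := sub_ne_zero.mpr (Ne.symm hv)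
        have hαeq : ι ((u - u') / (v' - v)) = α := by
          rw [map_div₀, div_eq_iff (fun hh => hvv (hιinj (hh.trans (map_zero ι).symm)))]
          rw [map_sub, map_sub]
          linear_combination h
        refine ⟨(u - u') / (v' - v), hιinj ?_⟩
        rw [map_pow, hαeq, hα]
    · rw [Fintype.card_prod, ZMod.card, hcard]
      ring
  -- Main computation for the LHS
  have key : (∑ y : K, χ y * eZ p (Algebra.trace (ZMod p) K y))
      = χ (ι (2 : ZMod p)⁻¹) * (∑ y : ZMod p, χ (ι y) * eZ p y)
        * ∑ s : ZMod p, χ (1 + ι s * α) := by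
    have e0 : (∑ y : K, χ y * eZ p (Algebra.trace (ZMod p) K y))
        = ∑ uv : ZMod p × ZMod p, χ (ι uv.1 + ι uv.2 * α) * eZ p (2 * uv.1) := by
      refine (Fintype.sum_bijective _ hbij
        (fun uv : ZMod p × ZMod p => χ (ι uv.1 + ι uv.2 * α) * eZ p (2 * uv.1))
        (fun y : K => χ y * eZ p (Algebra.trace (ZMod p) K y)) ?_).symm
      intro uv
      simp only [htr]
    have e1 : (∑ uv : ZMod p × ZMod p, χ (ι uv.1 + ι uv.2 * α) * eZ p (2 * uv.1))
        = ∑ v : ZMod p, ∑ u : ZMod p, χ (ι u + ι v * α) * eZ p (2 * u) :=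
      Fintype.sum_prod_type_right _
    have inner : ∀ v : ZMod p, v ≠ 0 →
        (∑ u : ZMod p, χ (ι u + ι v * α) * eZ p (2 * u))
          = ∑ t : ZMod p, χ (ι v) * (χ (ι t + α) * eZ p (2 * (v * t))) := by
      intro v hv
      refine (Fintype.sum_bijective (fun t : ZMod p => v * t) (mulLeft_bijective₀ v hv)
        (fun t => χ (ι v) * (χ (ι t + α) * eZ p (2 * (v * t))))
        (fun u => χ (ι u + ι v * α) * eZ p (2 * u)) ?_).symm
      intro t
      have harg : ι (v * t) + ι v * α = ι v * (ι t + α) := by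
        rw [map_mul]; ring
      rw [harg, map_mul]
      ring
    have hsplit : (∑ v : ZMod p, ∑ u : ZMod p, χ (ι u + ι v * α) * eZ p (2 * u))
        = (∑ u : ZMod p, χ (ι u + ι (0 : ZMod p) * α) * eZ p (2 * u))
          + ∑ v ∈ Finset.univ.erase (0 : ZMod p),
              ∑ u : ZMod p, χ (ι u + ι v * α) * eZ p (2 * u) :=
      (Finset.add_sum_erase _ _ (Finset.mem_univ 0)).symm
    have hv0 : (∑ u : ZMod p, χ (ι u + ι (0 : ZMod p) * α) * eZ p (2 * u))
        = χ (ι (2 : ZMod p)⁻¹) * ∑ y : ZMod p, χ (ι y) * eZ p y := by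
      have h1 : ∀ u : ZMod p, ι u + ι (0 : ZMod p) * α = ι u := by
        intro u; rw [map_zero, zero_mul, add_zero]
      rw [Finset.sum_congr rfl fun u _ => by rw [h1 u], Finset.mul_sum]
      refine Fintype.sum_bijective (fun u : ZMod p => 2 * u) (mulLeft_bijective₀ 2 h2Z)
        (fun u => χ (ι u) * eZ p (2 * u))
        (fun w => χ (ι (2 : ZMod p)⁻¹) * (χ (ι w) * eZ p w)) ?_
      intro u
      have h2' : χ (ι (2 : ZMod p)⁻¹) * χ (ι (2 * u)) = χ (ι u) := by
        rw [← map_mul, ← map_mul, inv_mul_cancel_left₀ h2Z]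
      rw [← h2']
      ring
    have herase : (∑ v ∈ Finset.univ.erase (0 : ZMod p),
          ∑ u : ZMod p, χ (ι u + ι v * α) * eZ p (2 * u))
        = ∑ v : ZMod p, ∑ t : ZMod p, χ (ι v) * (χ (ι t + α) * eZ p (2 * (v * t))) := by
      rw [Finset.sum_congr rfl (fun v hv => inner v (Finset.mem_erase.mp hv).1)]
      refine Finset.sum_erase _ ?_
      apply Finset.sum_eq_zero
      intro t _
      rw [map_zero, MulChar.map_zero, zero_mul]
    have hswap : (∑ v : ZMod p, ∑ t : ZMod p, χ (ι v) * (χ (ι t + α) * eZ p (2 * (v * t))))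
        = ∑ t : ZMod p, χ (ι t + α) * ∑ v : ZMod p, χ (ι v) * eZ p (2 * (v * t)) := by
      rw [Finset.sum_comm]
      refine Finset.sum_congr rfl fun t _ => ?_
      rw [Finset.mul_sum]
      refine Finset.sum_congr rfl fun v _ => ?_
      ring
    have hQ0 : (∑ v : ZMod p, χ (ι v) * eZ p (2 * (v * (0 : ZMod p)))) = 0 := by
      have h1 : ∀ v : ZMod p, eZ p (2 * (v * (0 : ZMod p))) = 1 := by
        intro v
        rw [mul_zero, mul_zero]
        show zetaC p ^ (0 : ZMod p).val = 1
        rw [ZMod.val_zero, pow_zero]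
      rw [Finset.sum_congr rfl fun v _ => by rw [h1 v, mul_one]]
      exact hsum0
    have hQt : ∀ t : ZMod p, t ≠ 0 →
        (∑ v : ZMod p, χ (ι v) * eZ p (2 * (v * t)))
          = χ (ι ((2 * t)⁻¹)) * ∑ y : ZMod p, χ (ι y) * eZ p y := by
      intro t ht
      have h2t : (2 : ZMod p) * t ≠ 0 := mul_ne_zero h2Z ht
      rw [Finset.mul_sum]
      refine (Fintype.sum_bijective (fun w : ZMod p => (2 * t)⁻¹ * w)
        (mulLeft_bijective₀ _ (inv_ne_zero h2t))
        (fun w => χ (ι ((2 * t)⁻¹)) * (χ (ι w) * eZ p w))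
        (fun v => χ (ι v) * eZ p (2 * (v * t))) ?_).symm
      intro w
      have harg : 2 * (((2 * t)⁻¹ * w) * t) = w := by
        rw [show (2 : ZMod p) * (((2 * t)⁻¹ * w) * t) = ((2 * t) * (2 * t)⁻¹) * w from by ring,
          mul_inv_cancel₀ h2t, one_mul]
      have hmul : χ (ι ((2 * t)⁻¹)) * χ (ι w) = χ (ι ((2 * t)⁻¹ * w)) := by
        rw [← map_mul, ← map_mul]
      rw [harg, ← hmul]
      ring
    have hfin : (∑ t : ZMod p, χ (ι t + α) * ∑ v : ZMod p, χ (ι v) * eZ p (2 * (v * t)))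
        = ∑ t ∈ Finset.univ.erase (0 : ZMod p),
            χ (ι (2 : ZMod p)⁻¹) * χ (1 + ι t⁻¹ * α) * (∑ y : ZMod p, χ (ι y) * eZ p y) := by
      rw [(Finset.add_sum_erase _
        (fun t : ZMod p => χ (ι t + α) * ∑ v : ZMod p, χ (ι v) * eZ p (2 * (v * t)))
        (Finset.mem_univ 0)).symm]
      rw [hQ0, mul_zero, zero_add]
      refine Finset.sum_congr rfl fun t ht => ?_
      have ht0 : t ≠ 0 := (Finset.mem_erase.mp ht).1
      rw [hQt t ht0, ← mul_assoc]
      congr 1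
      have htt : ι t * ι t⁻¹ = 1 := by rw [← map_mul, mul_inv_cancel₀ ht0, map_one]
      have hsplitinv : ι ((2 * t)⁻¹) = ι (2 : ZMod p)⁻¹ * ι t⁻¹ := by
        rw [mul_inv, map_mul]
      rw [← map_mul, ← map_mul]
      congr 1
      rw [hsplitinv]
      linear_combination (ι (2 : ZMod p)⁻¹) * htt
    have hinvsum : (∑ t : ZMod p, χ (1 + ι t⁻¹ * α)) = ∑ s : ZMod p, χ (1 + ι s * α) :=
      Fintype.sum_bijective (fun t : ZMod p => t⁻¹)
        (Function.Involutive.bijective (fun x : ZMod p => inv_inv x)) _ _ (fun t => rfl)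
    have hlast : χ (ι (2 : ZMod p)⁻¹) * (∑ y : ZMod p, χ (ι y) * eZ p y)
          + (∑ t ∈ Finset.univ.erase (0 : ZMod p),
              χ (ι (2 : ZMod p)⁻¹) * χ (1 + ι t⁻¹ * α) * (∑ y : ZMod p, χ (ι y) * eZ p y))
        = χ (ι (2 : ZMod p)⁻¹) * (∑ y : ZMod p, χ (ι y) * eZ p y)
            * ∑ s : ZMod p, χ (1 + ι s * α) := by
      have h00 : χ (ι (2 : ZMod p)⁻¹) * (∑ y : ZMod p, χ (ι y) * eZ p y)
          = χ (ι (2 : ZMod p)⁻¹) * χ (1 + ι (0 : ZMod p)⁻¹ * α)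
              * (∑ y : ZMod p, χ (ι y) * eZ p y) := by
        rw [inv_zero, map_zero, zero_mul, add_zero, map_one, mul_one]
      conv_lhs => rw [h00]
      rw [Finset.add_sum_erase _
        (fun t : ZMod p => χ (ι (2 : ZMod p)⁻¹) * χ (1 + ι t⁻¹ * α)
          * (∑ y : ZMod p, χ (ι y) * eZ p y)) (Finset.mem_univ 0)]
      conv_rhs => rw [← hinvsum, Finset.mul_sum]
      refine Finset.sum_congr rfl fun t _ => ?_
      ring
    calc (∑ y : K, χ y * eZ p (Algebra.trace (ZMod p) K y))
        = ∑ uv : ZMod p × ZMod p, χ (ι uv.1 + ι uv.2 * α) * eZ p (2 * uv.1) := e0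
      _ = ∑ v : ZMod p, ∑ u : ZMod p, χ (ι u + ι v * α) * eZ p (2 * u) := e1
      _ = (∑ u : ZMod p, χ (ι u + ι (0 : ZMod p) * α) * eZ p (2 * u))
          + ∑ v ∈ Finset.univ.erase (0 : ZMod p),
              ∑ u : ZMod p, χ (ι u + ι v * α) * eZ p (2 * u) := hsplit
      _ = χ (ι (2 : ZMod p)⁻¹) * (∑ y : ZMod p, χ (ι y) * eZ p y)
          + ∑ t : ZMod p, χ (ι t + α) * ∑ v : ZMod p, χ (ι v) * eZ p (2 * (v * t)) := by
            rw [hv0, herase, hswap]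
      _ = χ (ι (2 : ZMod p)⁻¹) * (∑ y : ZMod p, χ (ι y) * eZ p y)
          + ∑ t ∈ Finset.univ.erase (0 : ZMod p),
              χ (ι (2 : ZMod p)⁻¹) * χ (1 + ι t⁻¹ * α)
                * (∑ y : ZMod p, χ (ι y) * eZ p y) := by rw [hfin]
      _ = χ (ι (2 : ZMod p)⁻¹) * (∑ y : ZMod p, χ (ι y) * eZ p y)
            * ∑ s : ZMod p, χ (1 + ι s * α) := hlast
  calc gaussSumF p K (fun y => χ y)
      = ∑ y : K, χ y * eZ p (Algebra.trace (ZMod p) K y) := rfl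
    _ = χ (ι (2 : ZMod p)⁻¹) * (∑ y : ZMod p, χ (ι y) * eZ p y)
        * ∑ s : ZMod p, χ (1 + ι s * α) := key
    _ = (∑ y : ZMod p, χ (ι y) * eZ p y)
        * (χ ((2 * α)⁻¹) * ∑ s : ZMod p, χ (1 + ι s * α)) := by rw [hχ2]; ring
    _ = gaussSumP p (fun y => χ (algebraMap (ZMod p) K y)) *
        ∑ z : ZMod p, χ ((2 * α)⁻¹ + algebraMap (ZMod p) K z) := by
          rw [hG1rfl, hR]
end

section
/- Let p ≡ 1 (mod 6) be a prime and let χ be a nontrivial cubic multiplicative character of F_{p²}. Let β ∈ F_p^* be an element that is a cube in F_p and a quadratic non-residue in F_p, and let α ∈ F_{p²} be a root of X² − β. Let χ' denote the restriction of χ to F_p, set A = Σ_{x ∈ F_p} χ'(x(x−1)) and A_1(1/(2α)) = Σ_{z ∈ F_p} χ(1/(2α) + z). Then A = − conjugate(A_1(1/(2α))). -/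
open Finset

section Aux

variable (p : ℕ) [Fact (Nat.Prime p)] (K : Type) [Field K] [Algebra (ZMod p) K]

/-- Restriction of a multiplicative character of `K` to `ZMod p`. -/
noncomputable def resMulChar (χ : MulChar K ℂ) : MulChar (ZMod p) ℂ where
  toFun x := χ (algebraMap (ZMod p) K x)
  map_one' := by simp
  map_mul' x y := by simp
  map_nonunit' a ha := by
    have h0 : a = 0 := by simpa [isUnit_iff_ne_zero] using ha
    subst h0
    simp [MulChar.map_zero]

@[simp] lemma resMulChar_apply (χ : MulChar K ℂ) (x : ZMod p) :
    resMulChar p K χ x = χ (algebraMap (ZMod p) K x) := rfl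

end Aux

theorem stmt18 (p : ℕ) [NeZero p] (hp : p.Prime) (hp6 : p % 6 = 1)
    (K : Type) [Field K] [Fintype K] [Algebra (ZMod p) K]
    (hcard : Fintype.card K = p ^ 2)
    (χ : MulChar K ℂ) (hord : orderOf χ = 3)
    (β : ZMod p) (hβ0 : β ≠ 0)
    (hcube : ∃ c : ZMod p, c ^ 3 = β)
    (hnres : ¬ ∃ c : ZMod p, c ^ 2 = β)
    (α : K) (hα : α ^ 2 = algebraMap (ZMod p) K β) :
    ∑ x : ZMod p, χ (algebraMap (ZMod p) K (x * (x - 1))) =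
      -(starRingEnd ℂ) (∑ z : ZMod p, χ ((2 * α)⁻¹ + algebraMap (ZMod p) K z)) := by
  haveI : Fact (Nat.Prime p) := ⟨hp⟩
  have hp2 : p % 2 = 1 := by omega
  have hp3 : p % 3 = 1 := by omega
  have hp5 : 5 ≤ p := by
    have := hp.two_le; omega
  set φ : ZMod p →+* K := algebraMap (ZMod p) K with hφdef
  have hφ : Function.Injective φ := φ.injective
  haveI : CharP K p := charP_of_injective_algebraMap hφ p
  -- basic nonzero facts
  have h2Z : (2 : ZMod p) ≠ 0 := by
    intro h
    have h' : ((2 : ℕ) : ZMod p) = 0 := by exact_mod_cast h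
    have hd := (ZMod.natCast_eq_zero_iff 2 p).mp h'
    have := Nat.le_of_dvd (by norm_num) hd
    omega
  have h4Z : (4 : ZMod p) ≠ 0 := by
    have : (4 : ZMod p) = 2 * 2 := by norm_num
    rw [this]
    exact mul_ne_zero h2Z h2Z
  have hα0 : α ≠ 0 := by
    intro h
    apply hβ0
    apply hφ
    rw [← hα, h, map_zero]
    ring
  -- χ values are cube roots of unity
  have hχ3 : χ ^ 3 = 1 := by rw [← hord]; exact pow_orderOf_eq_one χ
  have hval : ∀ u : K, u ≠ 0 → χ u ^ 3 = 1 := by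
    intro u hu
    rw [← MulChar.pow_apply' χ (by norm_num) u, hχ3,
      MulChar.one_apply (isUnit_iff_ne_zero.mpr hu)]
  -- conjugation formula
  have hconj : ∀ u : K, u ≠ 0 → (starRingEnd ℂ) (χ u) = χ (u ^ (p + 1)) := by
    intro u hu
    have hz3 : χ u ^ 3 = 1 := hval u hu
    have hz0 : χ u ≠ 0 := by
      intro h; rw [h] at hz3; simp at hz3
    have habs : ‖χ u‖ = 1 := by
      have h3 : ‖χ u‖ ^ 3 = 1 := by
        rw [← norm_pow, hz3, norm_one]
      nlinarith [norm_nonneg (χ u), sq_nonneg (‖χ u‖ - 1),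
        sq_nonneg (‖χ u‖ + 1)]
    have hmc : χ u * (starRingEnd ℂ) (χ u) = 1 := by
      rw [Complex.mul_conj]
      norm_cast
      rw [Complex.normSq_eq_norm_sq, habs]; norm_num
    have hconj2 : (starRingEnd ℂ) (χ u) = χ u ^ 2 := by
      apply mul_left_cancel₀ hz0
      rw [hmc, ← pow_succ']
      exact hz3.symm
    obtain ⟨k, hk⟩ : ∃ k, p + 1 = 3 * k + 2 := ⟨(p - 1) / 3, by omega⟩
    rw [map_pow, hk, pow_add, pow_mul, hz3, one_pow, one_mul, hconj2]
  -- β is a non-square : β ^ ((p-1)/2) = -1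
  have hβns : ¬ IsSquare β := by
    intro ⟨r, hr⟩
    exact hnres ⟨r, by rw [sq, hr]⟩
  have hβpow : β ^ (p / 2) = -1 := by
    have hchar : ringChar (ZMod p) ≠ 2 := by
      rw [ZMod.ringChar_zmod_n]; omega
    have hiff := FiniteField.isSquare_iff hchar hβ0
    rw [ZMod.card] at hiff
    have hne : β ^ (p / 2) ≠ 1 := fun h => hβns (hiff.mpr h)
    have hsq : β ^ (p / 2) * β ^ (p / 2) = 1 := by
      rw [← pow_add]
      have hh : p / 2 + p / 2 = p - 1 := by omega
      rw [hh]
      exact ZMod.pow_card_sub_one_eq_one hβ0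
    rcases mul_self_eq_one_iff.mp hsq with h | h
    · exact absurd h hne
    · exact h
  -- Frobenius: α ^ p = -α
  have hαp : α ^ p = -α := by
    have hpodd : p = 2 * (p / 2) + 1 := by omega
    calc α ^ p = α ^ (2 * (p / 2)) * α := by
          rw [← pow_succ, ← hpodd]
      _ = (α ^ 2) ^ (p / 2) * α := by rw [← pow_mul]
      _ = φ (β ^ (p / 2)) * α := by rw [hα, map_pow]
      _ = -α := by rw [hβpow, map_neg, map_one, neg_one_mul]
  -- the restricted character
  set χ' : MulChar (ZMod p) ℂ := resMulChar p K χ with hχ'def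
  have hχ'cube : ∀ a : ZMod p, a ≠ 0 → χ' a ^ 3 = 1 := by
    intro a ha
    simpa [hχ'def, hφdef] using hval (φ a) (fun h => ha (hφ (by simpa using h)))
  -- every Frobenius-fixed point lies in the prime field
  have hfix : ∀ x : K, x ^ p = x → ∃ y : ZMod p, φ y = x := by
    intro x hx
    by_contra hnx
    push_neg at hnx
    classical
    set f : Polynomial K := Polynomial.X ^ p - Polynomial.X with hfdef
    have hfdeg : f.natDegree = p := by
      rw [hfdef, Polynomial.natDegree_sub_eq_left_of_natDegree_lt, Polynomial.natDegree_X_pow]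
      rw [Polynomial.natDegree_X_pow, Polynomial.natDegree_X]; omega
    have hf0 : f ≠ 0 := by
      intro h
      rw [h, Polynomial.natDegree_zero] at hfdeg
      omega
    set s : Finset K := insert x (Finset.univ.image φ) with hsdef
    have hscard : s.card = p + 1 := by
      rw [hsdef, Finset.card_insert_of_notMem, Finset.card_image_of_injective _ hφ,
        Finset.card_univ, ZMod.card]
      intro hmem
      obtain ⟨y, _, hy⟩ := Finset.mem_image.mp hmem
      exact hnx y hy
    have hroots : s.val ≤ f.roots := by
      rw [Multiset.le_iff_subset s.nodup]
      intro a ha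
      rw [← Finset.mem_def, hsdef, Finset.mem_insert] at ha
      have hap : a ^ p = a := by
        rcases ha with rfl | ha
        · exact hx
        · obtain ⟨y, _, hy⟩ := Finset.mem_image.mp ha
          rw [← hy, ← map_pow, ZMod.pow_card]
      rw [Polynomial.mem_roots hf0, hfdef]
      simp [Polynomial.IsRoot, hap]
    have hle : s.card ≤ p := by
      have h1 : s.val.card ≤ f.roots.card := Multiset.card_le_card hroots
      have h2 : f.roots.card ≤ f.natDegree := f.card_roots'
      simpa [hfdeg] using h1.trans h2
    omega
  -- χ' is nontrivial
  have hχ'1 : χ' ≠ 1 := by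
    intro h
    have hsq : χ ^ 2 = 1 := by
      apply MulChar.ext
      intro u
      have hu0 : (u : K) ≠ 0 := u.ne_zero
      have h1 : ((u : K) ^ (p + 1)) ^ p = (u : K) ^ (p + 1) := by
        have hcard' : (u : K) ^ (p ^ 2 - 1) = 1 := by
          have hh := FiniteField.pow_card_sub_one_eq_one (u : K) hu0
          rwa [hcard] at hh
        have hexp : (p + 1) * p = (p ^ 2 - 1) + (p + 1) := by
          have h2le : 1 ≤ p ^ 2 := Nat.one_le_pow _ _ hp.pos
          zify [h2le]
          ring
        rw [← pow_mul, hexp, pow_add, hcard', one_mul]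
      obtain ⟨y, hy⟩ := hfix _ h1
      have hy0 : y ≠ 0 := by
        intro hh
        rw [hh, map_zero] at hy
        exact pow_ne_zero _ hu0 hy.symm
      have h2 : (χ ^ 2) u = χ ((u : K) ^ (p + 1)) := by
        rw [map_pow]
        obtain ⟨k, hk⟩ : ∃ k, p + 1 = 3 * k + 2 := ⟨(p - 1) / 3, by omega⟩
        rw [hk, pow_add, pow_mul, hval _ hu0, one_pow, one_mul, MulChar.pow_apply_coe]
      have h3 : χ (φ y) = 1 := by
        have := congrArg (fun ξ : MulChar (ZMod p) ℂ => ξ y) h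
        simpa [hχ'def, MulChar.one_apply (isUnit_iff_ne_zero.mpr hy0)] using this
      rw [MulChar.one_apply_coe, h2, ← hy, h3]
    have hdvd := orderOf_dvd_of_pow_eq_one hsq
    rw [hord] at hdvd
    norm_num at hdvd
  -- main character sum evaluation
  set η : MulChar (ZMod p) ℤ := quadraticChar (ZMod p) with hηdef
  set J : ℂ := ∑ v : ZMod p, ((η v : ℤ) : ℂ) * χ' (v - 1) with hJdef
  have key : ∀ c : ZMod p, c ≠ 0 →
      ∑ x : ZMod p, χ' (x ^ 2 - c) = ((η c : ℤ) : ℂ) * χ' c * J := by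
    intro c hc
    classical
    have hchar : ringChar (ZMod p) ≠ 2 := by rw [ZMod.ringChar_zmod_n]; omega
    have step1 : ∑ x : ZMod p, χ' (x ^ 2 - c)
        = ∑ u : ZMod p, (((η u : ℤ) : ℂ) + 1) * χ' (u - c) := by
      rw [← Finset.sum_fiberwise' Finset.univ (fun x : ZMod p => x ^ 2)
        (fun u => χ' (u - c))]
      refine Finset.sum_congr rfl fun u _ => ?_
      rw [Finset.sum_const, nsmul_eq_mul]
      congr 1
      have hcnt := quadraticChar_card_sqrts hchar u
      have hft : (Finset.univ.filter fun x : ZMod p => x ^ 2 = u)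
          = {x : ZMod p | x ^ 2 = u}.toFinset := by
        ext a; simp
      rw [hft]
      exact_mod_cast congrArg (fun n : ℤ => (n : ℂ)) hcnt
    have step2 : ∑ u : ZMod p, χ' (u - c) = 0 := by
      have he : ∑ u : ZMod p, χ' u = ∑ u : ZMod p, χ' (u - c) :=
        Fintype.sum_equiv (Equiv.addRight c) _ _ (fun u => by simp)
      rw [← he]
      exact MulChar.sum_eq_zero_of_ne_one hχ'1
    have step3 : ∑ u : ZMod p, ((η u : ℤ) : ℂ) * χ' (u - c)
        = ((η c : ℤ) : ℂ) * χ' c * J := by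
      have he : ∑ v : ZMod p, ((η (c * v) : ℤ) : ℂ) * χ' (c * v - c)
          = ∑ u : ZMod p, ((η u : ℤ) : ℂ) * χ' (u - c) :=
        Fintype.sum_equiv (Equiv.mulLeft₀ c hc) _ _ (fun v => by simp)
      rw [← he, hJdef, Finset.mul_sum]
      refine Finset.sum_congr rfl fun v _ => ?_
      have h1 : c * v - c = c * (v - 1) := by ring
      rw [h1, map_mul, map_mul]
      push_cast
      ring
    rw [step1]
    have hsplit : ∑ u : ZMod p, (((η u : ℤ) : ℂ) + 1) * χ' (u - c)
        = (∑ u : ZMod p, ((η u : ℤ) : ℂ) * χ' (u - c)) + ∑ u : ZMod p, χ' (u - c) := by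
      rw [← Finset.sum_add_distrib]
      refine Finset.sum_congr rfl fun u _ => by ring
    rw [hsplit, step2, add_zero, step3]
  -- rewrite LHS
  have hLHS : ∑ x : ZMod p, χ (φ (x * (x - 1))) =
      ∑ x : ZMod p, χ' (x ^ 2 - (4 : ZMod p)⁻¹) := by
    refine (Fintype.sum_equiv (Equiv.addRight ((2 : ZMod p)⁻¹))
      (fun y => χ' (y ^ 2 - (4 : ZMod p)⁻¹)) (fun x => χ (φ (x * (x - 1)))) fun y => ?_).symm
    have hy : (y + (2 : ZMod p)⁻¹) * ((y + (2 : ZMod p)⁻¹) - 1) = y ^ 2 - (4 : ZMod p)⁻¹ := by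
      have h4 : (4 : ZMod p) = 2 * 2 := by norm_num
      rw [h4]
      field_simp
      ring
    simp only [Equiv.coe_addRight, hχ'def, resMulChar_apply, hy, hφdef]
  -- rewrite RHS
  have hRHS : (starRingEnd ℂ) (∑ z : ZMod p, χ ((2 * α)⁻¹ + φ z)) =
      ∑ z : ZMod p, χ' (z ^ 2 - ((4 : ZMod p) * β)⁻¹) := by
    have h2K : (2 : K) ≠ 0 := by
      intro h
      apply h2Z
      apply hφ
      rw [map_ofNat, map_zero, h]
    have h2α : 2 * α ≠ 0 := mul_ne_zero h2K hα0
    rw [map_sum]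
    refine Finset.sum_congr rfl fun z _ => ?_
    have hu0 : (2 * α)⁻¹ + φ z ≠ 0 := by
      intro h
      have hz0 : φ z ≠ 0 := by
        intro h0
        rw [h0, add_zero] at h
        exact inv_ne_zero h2α h
      have hz0' : z ≠ 0 := fun hh => hz0 (by rw [hh, map_zero])
      have h1 : (2 * α)⁻¹ = -φ z := eq_neg_of_add_eq_zero_left h
      have h3 : α = φ ((2 : ZMod p)⁻¹ * (-z)⁻¹) := by
        rw [map_mul, map_inv₀, map_inv₀, map_neg, map_ofNat, ← h1, inv_inv]
        field_simp
      apply hnres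
      refine ⟨(2 : ZMod p)⁻¹ * (-z)⁻¹, ?_⟩
      apply hφ
      rw [map_pow, ← h3, hα]
    rw [hconj _ hu0]
    have hup : ((2 * α)⁻¹ + φ z) ^ p = -(2 * α)⁻¹ + φ z := by
      rw [add_pow_char]
      congr 1
      · rw [inv_pow]
        have h2p : (2 : K) ^ p = 2 := by
          have : ((2 : ZMod p) : ZMod p) ^ p = (2 : ZMod p) := ZMod.pow_card _
          calc (2 : K) ^ p = φ ((2 : ZMod p) ^ p) := by rw [map_pow, map_ofNat]
            _ = φ (2 : ZMod p) := by rw [ZMod.pow_card]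
            _ = 2 := map_ofNat φ 2
        rw [mul_pow, h2p, hαp, mul_neg, inv_neg]
      · rw [← map_pow, ZMod.pow_card]
    have ha2 : ((2 * α)⁻¹) ^ 2 = φ (((4 : ZMod p) * β)⁻¹) := by
      rw [inv_pow, mul_pow, hα, map_inv₀, map_mul]
      congr 2
      · rw [map_ofNat]; norm_num
    have hu2 : ((2 * α)⁻¹ + φ z) ^ (p + 1) = φ (z ^ 2 - ((4 : ZMod p) * β)⁻¹) := by
      rw [pow_succ, hup]
      calc (-(2 * α)⁻¹ + φ z) * ((2 * α)⁻¹ + φ z)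
          = φ z ^ 2 - ((2 * α)⁻¹) ^ 2 := by ring
        _ = φ (z ^ 2 - ((4 : ZMod p) * β)⁻¹) := by
            rw [ha2, ← map_pow, ← map_sub]
    rw [hu2]
    simp [hχ'def, hφdef]
  rw [hLHS, hRHS, key _ (inv_ne_zero h4Z), key _ (inv_ne_zero (mul_ne_zero h4Z hβ0))]
  -- now compare the coefficients
  have hβinv : ((4 : ZMod p) * β)⁻¹ = (4 : ZMod p)⁻¹ * β⁻¹ := mul_inv _ _
  have hηβ : η β⁻¹ = -1 := by
    have hb : η β = -1 := quadraticChar_neg_one_iff_not_isSquare.mpr hβns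
    have h1 : η β⁻¹ * η β = 1 := by
      rw [← map_mul, inv_mul_cancel₀ hβ0, map_one]
    rw [hb] at h1
    omega
  have hχ'β : χ' β = 1 := by
    obtain ⟨c, hc⟩ := hcube
    have hc0 : c ≠ 0 := by
      intro h; rw [h] at hc; simp at hc; exact hβ0 hc.symm
    rw [← hc, map_pow, hχ'cube c hc0]
  have hχ'βinv : χ' β⁻¹ = 1 := by
    have h1 : χ' β⁻¹ * χ' β = 1 := by
      rw [← map_mul, inv_mul_cancel₀ hβ0, map_one]
    rwa [hχ'β, mul_one] at h1
  rw [hβinv, map_mul, map_mul, hηβ, hχ'βinv]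
  push_cast
  ring
end

section
/- Let p ≡ 1 (mod 6) be a prime and let χ be a nontrivial cubic multiplicative character of F_{p²}, and let χ' denote its restriction to the subfield F_p. Then G_2(1,χ) = − (conjugate(G_1(1,χ')))², where G_2(1,χ) is the Gauss sum of χ over F_{p²} and G_1(1,χ') is the Gauss sum of χ' over F_p. -/
open Finset

section aux

variable {p : ℕ} [Fact p.Prime]

private lemma sum_reindex_count (t : ZMod p → ZMod p) (f : ZMod p → ℂ) :
    (∑ s : ZMod p, f (t s))
      = ∑ x : ZMod p, ((univ.filter fun s => t s = x).card : ℂ) * f x := by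
  have h1 : ∀ s : ZMod p, f (t s) = ∑ x : ZMod p, if t s = x then f x else 0 := by
    intro s
    rw [Finset.sum_ite_eq univ (t s) f, if_pos (mem_univ _)]
  simp_rw [h1]
  rw [Finset.sum_comm]
  refine Finset.sum_congr rfl fun x _ => ?_
  have h2 : ∀ s : ZMod p, (if t s = x then f x else 0) = (if t s = x then (1:ℂ) else 0) * f x := by
    intro s
    by_cases h : t s = x <;> simp [h]
  simp_rw [h2, ← Finset.sum_mul, Finset.sum_boole]

private lemma sq_count_aux (hp2 : p ≠ 2) {g : ZMod p} (hg : ¬ IsSquare g) (f : ZMod p → ℂ) :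
    ((∑ s : ZMod p, f (s ^ 2)) + ∑ b : ZMod p, f (g * b ^ 2)) = 2 * ∑ x : ZMod p, f x := by
  have hg0 : g ≠ 0 := fun h => hg (h ▸ ⟨0, by ring⟩)
  have hchar : ringChar (ZMod p) ≠ 2 := by
    rw [ZMod.ringChar_zmod_n]; exact hp2
  have hqg : quadraticChar (ZMod p) g = -1 := quadraticChar_neg_one_iff_not_isSquare.mpr hg
  have hcount : ∀ x : ZMod p,
      (((univ.filter fun s : ZMod p => s ^ 2 = x).card : ℤ)
        + ((univ.filter fun b : ZMod p => g * b ^ 2 = x).card : ℤ)) = 2 := by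
    intro x
    have e1 : ((univ.filter fun s : ZMod p => s ^ 2 = x).card : ℤ)
        = quadraticChar (ZMod p) x + 1 := by
      rw [← quadraticChar_card_sqrts hchar x, Set.toFinset_setOf]
    have e2 : (univ.filter fun b : ZMod p => g * b ^ 2 = x)
        = (univ.filter fun b : ZMod p => b ^ 2 = g⁻¹ * x) := by
      refine Finset.filter_congr fun b _ => ?_
      constructor
      · intro h; rw [← h]; field_simp
      · intro h; rw [h]; field_simp
    have e3 : ((univ.filter fun b : ZMod p => b ^ 2 = g⁻¹ * x).card : ℤ)
        = quadraticChar (ZMod p) (g⁻¹ * x) + 1 := by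
      rw [← quadraticChar_card_sqrts hchar (g⁻¹ * x), Set.toFinset_setOf]
    have e4 : quadraticChar (ZMod p) (g⁻¹ * x) = - quadraticChar (ZMod p) x := by
      rw [map_mul]
      have h1 : quadraticChar (ZMod p) g⁻¹ * quadraticChar (ZMod p) g = 1 := by
        rw [← map_mul, inv_mul_cancel₀ hg0, map_one]
      rw [hqg] at h1
      have h5 : quadraticChar (ZMod p) g⁻¹ = -1 := by linarith
      rw [h5]; ring
    rw [e1, e2, e3, e4]; ring
  rw [sum_reindex_count (fun s => s ^ 2) f, sum_reindex_count (fun b => g * b ^ 2) f,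
    ← Finset.sum_add_distrib, Finset.mul_sum]
  refine Finset.sum_congr rfl fun x _ => ?_
  rw [← add_mul]
  congr 1
  have := hcount x
  exact_mod_cast congrArg (fun n : ℤ => (n : ℂ)) this

private lemma core_identity (hp2 : p ≠ 2) {g : ZMod p} (hg : ¬ IsSquare g)
    (lam : MulChar (ZMod p) ℂ) (hlam : lam ≠ 1) (ψ : AddChar (ZMod p) ℂ) :
    (∑ a : ZMod p, ∑ b : ZMod p, lam (a ^ 2 - g * b ^ 2) * ψ (2 * a))
      = -(∑ u : ZMod p, lam u * ψ u) ^ 2 := by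
  have h2 : (2 : ZMod p) ≠ 0 := by
    intro h
    have h' : ((2:ℕ) : ZMod p) = 0 := by exact_mod_cast h
    rw [ZMod.natCast_eq_zero_iff] at h'
    exact hp2 ((Nat.prime_dvd_prime_iff_eq (Fact.out) Nat.prime_two).mp h')
  have key : ∀ t : ZMod p, (∑ b : ZMod p, lam ((2⁻¹ * t) ^ 2 - g * b ^ 2))
      = -∑ u : ZMod p, lam (u * (t - u)) := by
    intro t
    set m : ZMod p := 2⁻¹ * t with hm_def
    have hm : (2 : ZMod p) * m = t := by
      rw [hm_def, ← mul_assoc, mul_inv_cancel₀ h2, one_mul]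
    have step1 : (∑ u : ZMod p, lam (u * (t - u)))
        = ∑ u : ZMod p, lam (m ^ 2 - (u - m) ^ 2) := by
      refine Finset.sum_congr rfl fun u _ => ?_
      congr 1
      linear_combination (-u : ZMod p) * hm
    have step2 : (∑ u : ZMod p, lam (m ^ 2 - (u - m) ^ 2))
        = ∑ s : ZMod p, lam (m ^ 2 - s ^ 2) :=
      Equiv.sum_comp (Equiv.subRight m) (fun s => lam (m ^ 2 - s ^ 2))
    have step3 := sq_count_aux hp2 hg (fun x => lam (m ^ 2 - x))
    have step4 : (∑ x : ZMod p, lam (m ^ 2 - x)) = ∑ y : ZMod p, lam y :=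
      Equiv.sum_comp (Equiv.subLeft (m ^ 2)) (fun y => lam y)
    have step5 : (∑ y : ZMod p, lam y) = 0 := MulChar.sum_eq_zero_of_ne_one hlam
    rw [step4, step5, mul_zero] at step3
    rw [step1, step2]
    linear_combination step3
  have lhs1 : (∑ a : ZMod p, ∑ b : ZMod p, lam (a ^ 2 - g * b ^ 2) * ψ (2 * a))
      = ∑ t : ZMod p, ∑ b : ZMod p, lam ((2⁻¹ * t) ^ 2 - g * b ^ 2) * ψ t := by
    rw [← Equiv.sum_comp (Equiv.mulLeft₀ (2⁻¹ : ZMod p) (inv_ne_zero h2))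
      (fun a => ∑ b : ZMod p, lam (a ^ 2 - g * b ^ 2) * ψ (2 * a))]
    refine Finset.sum_congr rfl fun t _ => ?_
    simp only [Equiv.mulLeft₀_apply]
    have : (2 : ZMod p) * (2⁻¹ * t) = t := by
      rw [← mul_assoc, mul_inv_cancel₀ h2, one_mul]
    rw [this]
  have rhs1 : (∑ u : ZMod p, lam u * ψ u) ^ 2
      = ∑ t : ZMod p, (∑ u : ZMod p, lam (u * (t - u))) * ψ t := by
    rw [sq, Finset.sum_mul_sum]
    have inner : ∀ u : ZMod p, (∑ v : ZMod p, (lam u * ψ u) * (lam v * ψ v))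
        = ∑ t : ZMod p, lam (u * (t - u)) * ψ t := by
      intro u
      rw [← Equiv.sum_comp (Equiv.subRight u) (fun v => (lam u * ψ u) * (lam v * ψ v))]
      refine Finset.sum_congr rfl fun t _ => ?_
      simp only [Equiv.subRight_apply]
      rw [map_mul]
      have hψ : ψ u * ψ (t - u) = ψ t := by
        rw [← AddChar.map_add_eq_mul, add_sub_cancel]
      calc (lam u * ψ u) * (lam (t - u) * ψ (t - u))
          = (lam u * lam (t - u)) * (ψ u * ψ (t - u)) := by ring
        _ = lam u * lam (t - u) * ψ t := by rw [hψ]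
    rw [Finset.sum_congr rfl (fun u _ => inner u), Finset.sum_comm]
    refine Finset.sum_congr rfl fun t _ => ?_
    rw [Finset.sum_mul]
  rw [lhs1, rhs1, ← Finset.sum_neg_distrib]
  refine Finset.sum_congr rfl fun t _ => ?_
  rw [← Finset.sum_mul, key t, neg_mul]

end aux

set_option maxHeartbeats 2000000 in
theorem stmt19 (p : ℕ) [NeZero p] (hp : p.Prime) (hp6 : p % 6 = 1)
    (K : Type) [Field K] [Fintype K] [Algebra (ZMod p) K]
    (hcard : Fintype.card K = p ^ 2)
    (χ : MulChar K ℂ) (hord : orderOf χ = 3) :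
    gaussSumF p K (fun y => χ y) =
      -((starRingEnd ℂ) (gaussSumP p (fun y => χ (algebraMap (ZMod p) K y)))) ^ 2 := by
  classical
  haveI : Fact p.Prime := ⟨hp⟩
  have hp2 : p ≠ 2 := by omega
  obtain ⟨m6, hm6⟩ : ∃ m, p = 6 * m + 1 := ⟨p / 6, by omega⟩
  have inj : Function.Injective (algebraMap (ZMod p) K) := (algebraMap (ZMod p) K).injective
  haveI : CharP K p := charP_of_injective_algebraMap inj p
  have hrange : ∀ a : ZMod p, (algebraMap (ZMod p) K a) ^ p = algebraMap (ZMod p) K a := by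
    intro a; rw [← map_pow, ZMod.pow_card]
  have h2K : (2 : K) ≠ 0 := by
    intro hc
    have h' : ((2:ℕ) : K) = 0 := by exact_mod_cast hc
    rw [CharP.cast_eq_zero_iff K p 2] at h'
    exact hp2 ((Nat.prime_dvd_prime_iff_eq (Fact.out) Nat.prime_two).mp h')
  -- the fixed points of Frobenius are exactly the prime field
  have hfixcard : (univ.filter (fun x : K => x ^ p = x)).card ≤ p := by
    set f : Polynomial K := Polynomial.X ^ p - Polynomial.X with hf_def
    have hf : f ≠ 0 := by
      intro h
      have : f.coeff p = 1 := by
        have hp1 : ¬ (1 = p) := by have := hp.one_lt; omega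
        simp [hf_def, Polynomial.coeff_X_pow, Polynomial.coeff_X, hp1]
      rw [h, Polynomial.coeff_zero] at this
      exact one_ne_zero this.symm
    have hdeg : f.natDegree ≤ p := by
      refine le_trans (Polynomial.natDegree_sub_le _ _) ?_
      simp [Polynomial.natDegree_X_pow, Polynomial.natDegree_X]
      omega
    have hsub : (univ.filter (fun x : K => x ^ p = x)) ⊆ f.roots.toFinset := by
      intro x hx
      rw [Finset.mem_filter] at hx
      rw [Multiset.mem_toFinset, Polynomial.mem_roots hf]
      simp [Polynomial.IsRoot, hf_def, sub_eq_zero, hx.2]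
    calc (univ.filter (fun x : K => x ^ p = x)).card ≤ f.roots.toFinset.card :=
          Finset.card_le_card hsub
      _ ≤ Multiset.card f.roots := f.roots.toFinset_card_le
      _ ≤ f.natDegree := f.card_roots'
      _ ≤ p := hdeg
  have hfix : ∀ x : K, x ^ p = x ↔ x ∈ Set.range (algebraMap (ZMod p) K) := by
    intro x
    constructor
    · intro hx
      have hSsub : (univ.image (algebraMap (ZMod p) K)) ⊆ univ.filter (fun x : K => x ^ p = x) := by
        intro y hy
        rw [Finset.mem_image] at hy
        obtain ⟨a, _, rfl⟩ := hy
        exact Finset.mem_filter.mpr ⟨Finset.mem_univ _, hrange a⟩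
      have hScard : (univ.image (algebraMap (ZMod p) K)).card = p := by
        rw [Finset.card_image_of_injective _ inj, Finset.card_univ, ZMod.card]
      have heq : (univ.filter (fun x : K => x ^ p = x)) = univ.image (algebraMap (ZMod p) K) :=
        (Finset.eq_of_subset_of_card_le hSsub (by rw [hScard]; exact hfixcard)).symm
      have hx2 : x ∈ univ.image (algebraMap (ZMod p) K) := by
        rw [← heq]; exact Finset.mem_filter.mpr ⟨Finset.mem_univ _, hx⟩
      rw [Finset.mem_image] at hx2
      obtain ⟨a, _, ha⟩ := hx2
      exact ⟨a, ha⟩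
    · rintro ⟨a, rfl⟩; exact hrange a
  have hexists : ∃ x : K, x ^ p ≠ x := by
    by_contra hall
    push_neg at hall
    have : (univ.filter (fun x : K => x ^ p = x)) = univ := by
      apply Finset.eq_univ_of_forall
      intro x; exact Finset.mem_filter.mpr ⟨Finset.mem_univ _, hall x⟩
    rw [this, Finset.card_univ, hcard] at hfixcard
    nlinarith [hp.two_le]
  obtain ⟨x0, hx0⟩ := hexists
  set h : K := x0 ^ p - x0 with hh_def
  have hh0 : h ≠ 0 := fun hc => hx0 (by rwa [hh_def, sub_eq_zero] at hc)
  have hK2 : ∀ x : K, x ^ p ^ 2 = x := by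
    intro x
    have := FiniteField.pow_card x
    rwa [hcard] at this
  have hhp : h ^ p = -h := by
    rw [hh_def, sub_pow_char, ← pow_mul]
    have h1 : x0 ^ (p * p) = x0 := by have := hK2 x0; rwa [pow_two] at this
    rw [h1]; ring
  have hnotrange : h ∉ Set.range (algebraMap (ZMod p) K) := by
    intro hr
    have : h ^ p = h := (hfix h).mpr hr
    rw [hhp] at this
    apply hh0
    have h2 : (2:K) * h = 0 := by linear_combination - this
    rcases mul_eq_zero.mp h2 with hc | hc
    · exact absurd hc h2K
    · exact hc
  -- the nonsquare g
  have hgfix : (h ^ 2) ^ p = h ^ 2 := by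
    rw [← pow_mul, mul_comm, pow_mul, hhp]; ring
  obtain ⟨g, hg⟩ := (hfix (h ^ 2)).mp hgfix
  have hgns : ¬ IsSquare g := by
    rintro ⟨c, hc⟩
    have hsq : (h - algebraMap (ZMod p) K c) * (h + algebraMap (ZMod p) K c) = 0 := by
      have h1 : algebraMap (ZMod p) K g = (algebraMap (ZMod p) K c) ^ 2 := by
        rw [hc, map_mul]; ring
      rw [hg] at h1
      linear_combination h1
    rcases mul_eq_zero.mp hsq with h1 | h1
    · exact hnotrange ⟨c, (sub_eq_zero.mp h1).symm⟩
    · refine hnotrange ⟨-c, ?_⟩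
      rw [map_neg]
      linear_combination - h1
  -- basis
  have hfinrank : Module.finrank (ZMod p) K = 2 := by
    have hcard2 := Module.card_eq_pow_finrank (K := ZMod p) (V := K)
    rw [hcard, ZMod.card] at hcard2
    exact (Nat.pow_right_injective hp.two_le hcard2.symm)
  have hli : LinearIndependent (ZMod p) ![(1:K), h] := by
    rw [LinearIndependent.pair_iff]
    intro s t hst
    by_cases ht : t = 0
    · subst ht
      refine ⟨?_, rfl⟩
      rw [zero_smul, add_zero, Algebra.smul_def, mul_one] at hst
      exact inj (by rwa [map_zero])
    · exfalso
      apply hnotrange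
      refine ⟨-(t⁻¹ * s), ?_⟩
      rw [map_neg, map_mul, map_inv₀]
      rw [Algebra.smul_def, mul_one, Algebra.smul_def] at hst
      have htK : algebraMap (ZMod p) K t ≠ 0 := fun hc => ht (inj (by rwa [map_zero]))
      field_simp
      linear_combination - hst
  obtain ⟨bas, hbas⟩ : ∃ b : Module.Basis (Fin 2) (ZMod p) K, ⇑b = ![(1:K), h] :=
    ⟨basisOfLinearIndependentOfCardEqFinrank hli (by simp [hfinrank]),
      coe_basisOfLinearIndependentOfCardEqFinrank _ _⟩
  have hb0 : bas 0 = 1 := by rw [hbas]; rfl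
  have hb1 : bas 1 = h := by rw [hbas]; rfl
  -- the coordinate map
  set e : ZMod p × ZMod p → K :=
    fun ab => algebraMap (ZMod p) K ab.1 + algebraMap (ZMod p) K ab.2 * h with he_def
  have hebij : Function.Bijective e := by
    rw [Fintype.bijective_iff_injective_and_card]
    constructor
    · rintro ⟨a1, b1⟩ ⟨a2, b2⟩ hEq
      simp only [he_def] at hEq
      have hz : (a1 - a2) • (1:K) + (b1 - b2) • h = 0 := by
        rw [Algebra.smul_def, Algebra.smul_def, mul_one, map_sub, map_sub]
        linear_combination hEq
      obtain ⟨hs, htt⟩ := (LinearIndependent.pair_iff.mp hli) _ _ hz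
      have : a1 = a2 := by rwa [sub_eq_zero] at hs
      have : b1 = b2 := by rwa [sub_eq_zero] at htt
      simp_all
    · rw [Fintype.card_prod, ZMod.card, hcard, pow_two]
  -- trace computation
  have htr : ∀ a b : ZMod p,
      Algebra.trace (ZMod p) K (e (a, b)) = 2 * a := by
    intro a b
    rw [Algebra.trace_eq_matrix_trace bas, Matrix.trace_fin_two,
      Algebra.leftMulMatrix_eq_repr_mul, Algebra.leftMulMatrix_eq_repr_mul]
    have r0 : e (a, b) * bas 0 = a • bas 0 + b • bas 1 := by
      rw [hb0, hb1, mul_one, he_def]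
      simp only [Algebra.smul_def, mul_one]
    have r1 : e (a, b) * bas 1 = (b * g) • bas 0 + a • bas 1 := by
      rw [hb0, hb1, he_def]
      simp only [Algebra.smul_def, mul_one, map_mul]
      linear_combination (-(algebraMap (ZMod p) K b)) * hg
    rw [r0, r1, map_add, map_add, map_smul, map_smul, map_smul, map_smul,
      Module.Basis.repr_self, Module.Basis.repr_self]
    simp [Finsupp.single_apply]
    ring
  -- the character lam on ZMod p
  set lam : MulChar (ZMod p) ℂ :=
    { toFun := fun n => χ (algebraMap (ZMod p) K n) ^ 2,
      map_one' := by
        show χ (algebraMap (ZMod p) K (1 : ZMod p)) ^ 2 = 1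
        rw [map_one, map_one, one_pow],
      map_mul' := fun x y => by
        show χ (algebraMap (ZMod p) K (x * y)) ^ 2
          = χ (algebraMap (ZMod p) K x) ^ 2 * χ (algebraMap (ZMod p) K y) ^ 2
        rw [map_mul, map_mul, mul_pow],
      map_nonunit' := fun a ha => by
        have ha0 : a = 0 := by
          by_contra hc; exact ha (isUnit_iff_ne_zero.mpr hc)
        show χ (algebraMap (ZMod p) K a) ^ 2 = 0
        rw [ha0, map_zero, MulChar.map_nonunit χ not_isUnit_zero]
        norm_num } with hlam_def
  have hlam_apply : ∀ n : ZMod p, lam n = χ (algebraMap (ZMod p) K n) ^ 2 := fun n => rfl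
  have hchi3 : ∀ y : K, y ≠ 0 → χ y ^ 3 = 1 := by
    intro y hy
    rw [← MulChar.pow_apply' χ (by norm_num) y]
    have h31 : χ ^ 3 = 1 := by rw [← hord]; exact pow_orderOf_eq_one χ
    rw [h31]
    exact MulChar.one_apply (isUnit_iff_ne_zero.mpr hy)
  have hnorm : ∀ a b : ZMod p,
      e (a, b) * (e (a, b)) ^ p = algebraMap (ZMod p) K (a ^ 2 - g * b ^ 2) := by
    intro a b
    have hep : (e (a, b)) ^ p
        = algebraMap (ZMod p) K a - algebraMap (ZMod p) K b * h := by
      rw [he_def]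
      simp only
      rw [add_pow_char, mul_pow, hrange a, hrange b, hhp]
      ring
    rw [hep, he_def]
    simp only
    rw [map_sub, map_pow, map_mul, map_pow]
    linear_combination (algebraMap (ZMod p) K b) ^ 2 * hg
  have hcoord : ∀ a b : ZMod p, χ (e (a, b)) = lam (a ^ 2 - g * b ^ 2) := by
    intro a b
    by_cases hy : e (a, b) = 0
    · rw [hy, MulChar.map_nonunit χ not_isUnit_zero]
      have h0 : algebraMap (ZMod p) K (a ^ 2 - g * b ^ 2) = 0 := by
        rw [← hnorm a b, hy]; ring
      have h0' : a ^ 2 - g * b ^ 2 = 0 := inj (by rwa [map_zero])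
      rw [h0', hlam_apply, map_zero, MulChar.map_nonunit χ not_isUnit_zero]
      norm_num
    · have hu : χ (e (a, b)) ^ 3 = 1 := hchi3 _ hy
      have hl : lam (a ^ 2 - g * b ^ 2) = χ (e (a, b)) ^ (2 * p + 2) := by
        rw [hlam_apply, ← hnorm a b, map_mul, map_pow]
        ring
      rw [hl]
      have hexp : 2 * p + 2 = 3 * (4 * m6 + 1) + 1 := by omega
      rw [hexp, pow_succ, pow_mul, hu, one_pow, one_mul]
  have hlam_ne : lam ≠ 1 := by
    intro hl
    have hch : χ = 1 := by
      apply MulChar.ext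
      intro u
      obtain ⟨⟨a, b⟩, hab⟩ := hebij.2 (u : K)
      have hne : (u : K) ≠ 0 := u.ne_zero
      have hnz : a ^ 2 - g * b ^ 2 ≠ 0 := by
        intro hc
        have h0 : e (a, b) * e (a, b) ^ p = 0 := by
          rw [hnorm a b, hc, map_zero]
        rcases mul_eq_zero.mp h0 with h1 | h1
        · exact hne (hab ▸ h1)
        · have h2 : e (a, b) = 0 := (pow_eq_zero_iff (hp.pos.ne' : p ≠ 0)).mp h1
          exact hne (hab ▸ h2)
      have h1 : χ (u : K) = lam (a ^ 2 - g * b ^ 2) := by rw [← hab]; exact hcoord a b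
      rw [hl] at h1
      rw [h1, MulChar.one_apply (isUnit_iff_ne_zero.mpr hnz),
        MulChar.one_apply u.isUnit]
    rw [hch, orderOf_one] at hord
    omega
  -- additive character
  have hpC : (p : ℂ) ≠ 0 := Nat.cast_ne_zero.mpr (NeZero.ne p)
  have hzeta : zetaC p ^ p = 1 := by
    rw [zetaC, ← Complex.exp_nat_mul]
    have : (p:ℂ) * (2 * (Real.pi : ℂ) * Complex.I / (p : ℂ)) = 2 * Real.pi * Complex.I := by
      field_simp
    rw [this, Complex.exp_two_pi_mul_I]
  set ψ : AddChar (ZMod p) ℂ := AddChar.zmodChar p hzeta with hψ_def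
  have hψ : ∀ a : ZMod p, ψ a = zetaC p ^ a.val := fun a => AddChar.zmodChar_apply hzeta a
  have habszeta : ‖zetaC p‖ = 1 := by
    rw [zetaC]
    rw [show 2 * (Real.pi : ℂ) * Complex.I / (p : ℂ)
        = ((2 * Real.pi / p : ℝ) : ℂ) * Complex.I by push_cast; ring]
    exact Complex.norm_exp_ofReal_mul_I _
  have hconj_inv : ∀ z : ℂ, ‖z‖ = 1 → (starRingEnd ℂ) z = z⁻¹ := by
    intro z hz
    rw [Complex.inv_def, Complex.normSq_eq_norm_sq, hz]
    norm_num
  have hconjpsi : ∀ u : ZMod p, (starRingEnd ℂ) (ψ u) = ψ (-u) := by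
    intro u
    have h1 : ψ u * ψ (-u) = 1 := by
      rw [← AddChar.map_add_eq_mul, add_neg_cancel]
      exact AddChar.map_zero_eq_one ψ
    have habs1 : ‖ψ u‖ = 1 := by
      rw [hψ, norm_pow, habszeta, one_pow]
    rw [hconj_inv _ habs1]
    exact inv_eq_of_mul_eq_one_right h1
  have hcube : ∀ z : ℂ, z ^ 3 = 1 → (starRingEnd ℂ) z = z ^ 2 := by
    intro z hz
    have hz0 : z ≠ 0 := by
      intro hc; rw [hc] at hz; norm_num at hz
    have habs1 : ‖z‖ = 1 := by
      have h3 : ‖z‖ ^ 3 = 1 := by rw [← norm_pow, hz, norm_one]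
      nlinarith [norm_nonneg z, sq_nonneg (‖z‖ - 1),
        sq_nonneg (‖z‖ + 1)]
    rw [hconj_inv _ habs1]
    refine (eq_inv_of_mul_eq_one_left ?_).symm
    rw [← pow_succ]
    exact hz
  -- RHS
  have hRHS : (starRingEnd ℂ) (gaussSumP p (fun y => χ (algebraMap (ZMod p) K y)))
      = ∑ u : ZMod p, lam u * ψ u := by
    rw [gaussSumP, map_sum]
    have hpt : ∀ u : ZMod p,
        (starRingEnd ℂ) (χ (algebraMap (ZMod p) K u) * zetaC p ^ u.val)
          = χ (algebraMap (ZMod p) K u) ^ 2 * ψ (-u) := by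
      intro u
      rw [← hψ u, map_mul, hconjpsi u]
      congr 1
      by_cases hu : u = 0
      · subst hu
        rw [map_zero, MulChar.map_nonunit χ not_isUnit_zero]
        norm_num
      · refine hcube _ (hchi3 _ ?_)
        intro hc
        exact hu (inj (by rwa [map_zero]))
    rw [Finset.sum_congr rfl (fun u _ => hpt u)]
    rw [← Equiv.sum_comp (Equiv.neg (ZMod p))
      (fun u => χ (algebraMap (ZMod p) K u) ^ 2 * ψ (-u))]
    refine Finset.sum_congr rfl fun u _ => ?_
    simp only [Equiv.neg_apply, neg_neg]
    rw [hlam_apply]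
    have hm1 : χ (algebraMap (ZMod p) K (-u)) ^ 2 = χ (algebraMap (ZMod p) K u) ^ 2 := by
      rw [map_neg, neg_eq_neg_one_mul, map_mul, mul_pow]
      have : χ (-1 : K) ^ 2 = 1 := by
        rw [sq, ← map_mul, neg_one_mul, neg_neg, map_one]
      rw [this, one_mul]
    rw [hm1]
  -- LHS
  have hLHS : gaussSumF p K (fun y => χ y)
      = ∑ a : ZMod p, ∑ b : ZMod p, lam (a ^ 2 - g * b ^ 2) * ψ (2 * a) := by
    rw [gaussSumF]
    rw [← Fintype.sum_bijective e hebij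
      (fun ab => χ (e ab) * zetaC p ^ (Algebra.trace (ZMod p) K (e ab)).val)
      (fun y => χ y * zetaC p ^ (Algebra.trace (ZMod p) K y).val)
      (fun ab => rfl)]
    rw [Fintype.sum_prod_type]
    refine Finset.sum_congr rfl fun a _ => Finset.sum_congr rfl fun b _ => ?_
    rw [htr a b, hcoord a b, ← hψ]
  rw [hLHS, hRHS, core_identity hp2 hgns lam hlam_ne ψ]
end
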